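/- If T_π is differentiable at some point α ∈ [0,1), then its derivative T_π'(α) is an integer. More precisely, T_π'(α) = π_{s+1}(a_s) − π_{s+1}(a_s − 1) for all sufficiently large s with a_s ≠ 0, or T_π'(α) = π_{s+1}(1) − π_{s+1}(0) along infinitely many s if a_s = 0 infinitely often, where a_s = b_s(α). -/

import Mathlib

open scoped BigOperators
open Filter Topology

/-- Buck's measure density of a set of natural numbers. -/
noncomputable def buckDensity (S : Set ℕ) : ℝ :=
  sInf {x : ℝ | ∃ (k : ℕ) (r D : Fin k → ℕ), (∀ j, 0 < D j) ∧
    (S ⊆ ⋃ j, {n : ℕ | n % D j = r j % D j}) ∧ x = ∑ j, (1 : ℝ) / (D j : ℝ)}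

/-- A set is Buck measurable if its density and its complement's density sum to 1. -/
def BuckMeasurable (S : Set ℕ) : Prop :=
  buckDensity S + buckDensity Sᶜ = 1

/-- `Bprod m n = m 0 * m 1 * ⋯ * m (n-1)`, the partial products of the bases. -/
def Bprod (m : ℕ → ℕ) (n : ℕ) : ℕ := ∏ i ∈ Finset.range n, m i

section helpers
variable {m : ℕ → ℕ}

lemma Bpos (h2 : ∀ i, 2 ≤ m i) (n : ℕ) : 0 < (Bprod m n : ℝ) := by
  have : 0 < Bprod m n := Finset.prod_pos (fun i _ => by have := h2 i; omega)
  exact_mod_cast this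

lemma Bsucc (n : ℕ) :
    (Bprod m (n + 1) : ℝ) = (Bprod m n : ℝ) * (m n : ℝ) := by
  have : Bprod m (n + 1) = Bprod m n * m n := Finset.prod_range_succ _ _
  exact_mod_cast this

lemma two_pow_le_B (h2 : ∀ i, 2 ≤ m i) (n : ℕ) : (2 : ℝ) ^ n ≤ (Bprod m n : ℝ) := by
  have : 2 ^ n ≤ Bprod m n := by
    induction n with
    | zero => simp [Bprod]
    | succ n ih =>
      have : Bprod m (n + 1) = Bprod m n * m n := Finset.prod_range_succ _ _
      rw [this, pow_succ]
      exact Nat.mul_le_mul ih (h2 n)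
  exact_mod_cast this

lemma invB_le (h2 : ∀ i, 2 ≤ m i) (n : ℕ) :
    (1 : ℝ) / (Bprod m n : ℝ) ≤ (1 / 2) ^ n := by
  rw [one_div_pow]
  exact one_div_le_one_div_of_le (by positivity) (two_pow_le_B h2 n)

lemma key_identity (h2 : ∀ i, 2 ≤ m i) (n : ℕ) :
    ((m n : ℝ) - 1) / (Bprod m (n + 1) : ℝ)
      = 1 / (Bprod m n : ℝ) - 1 / (Bprod m (n + 1) : ℝ) := by
  have hB := Bsucc (m := m) n
  have h1 := Bpos h2 n
  have hm : (0 : ℝ) < (m n : ℝ) := by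
    have := h2 n
    have : (2 : ℝ) ≤ (m n : ℝ) := by exact_mod_cast this
    linarith
  rw [hB]
  field_simp

lemma digit_term_le (h2 : ∀ i, 2 ≤ m i) {c : ℕ → ℕ} (hc : ∀ j, c j < m j) (j : ℕ) :
    (c j : ℝ) / (Bprod m (j + 1) : ℝ) ≤ (1 / 2) ^ j := by
  have h1 : (c j : ℝ) ≤ (m j : ℝ) - 1 := by
    have := hc j
    have : (c j : ℝ) + 1 ≤ (m j : ℝ) := by exact_mod_cast this
    linarith
  calc (c j : ℝ) / (Bprod m (j + 1) : ℝ)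
      ≤ ((m j : ℝ) - 1) / (Bprod m (j + 1) : ℝ) := by gcongr
    _ = 1 / (Bprod m j : ℝ) - 1 / (Bprod m (j + 1) : ℝ) := key_identity h2 j
    _ ≤ 1 / (Bprod m j : ℝ) := by
        have := Bpos h2 (j + 1); have : (0:ℝ) ≤ 1 / (Bprod m (j+1) : ℝ) := by positivity
        linarith
    _ ≤ (1 / 2) ^ j := invB_le h2 j

lemma summable_digits (h2 : ∀ i, 2 ≤ m i) {c : ℕ → ℕ} (hc : ∀ j, c j < m j) :
    Summable (fun j => (c j : ℝ) / (Bprod m (j + 1) : ℝ)) :=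
  Summable.of_nonneg_of_le (fun j => by positivity) (digit_term_le h2 hc)
    summable_geometric_two
lemma hasSum_tail (h2 : ∀ i, 2 ≤ m i) (s : ℕ) :
    HasSum (fun j => ((m (j + s) : ℝ) - 1) / (Bprod m (j + s + 1) : ℝ))
      (1 / (Bprod m s : ℝ)) := by
  have hle : ∀ j : ℕ, ((m (j + s) : ℝ) - 1) / (Bprod m (j + s + 1) : ℝ) ≤ (1/2 : ℝ) ^ j := by
    intro j
    calc ((m (j + s) : ℝ) - 1) / (Bprod m (j + s + 1) : ℝ)
        = 1 / (Bprod m (j + s) : ℝ) - 1 / (Bprod m (j + s + 1) : ℝ) := key_identity h2 _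
      _ ≤ 1 / (Bprod m (j + s) : ℝ) := by
          have h := Bpos h2 (j+s+1)
          have : (0:ℝ) ≤ 1 / (Bprod m (j+s+1) : ℝ) := by positivity
          linarith
      _ ≤ (1/2) ^ (j + s) := invB_le h2 _
      _ ≤ (1/2) ^ j := pow_le_pow_of_le_one (by norm_num) (by norm_num) (Nat.le_add_right _ _)
  have hnn : ∀ j : ℕ, (0:ℝ) ≤ ((m (j + s) : ℝ) - 1) / (Bprod m (j + s + 1) : ℝ) := by
    intro j
    have h1 : (1 : ℝ) ≤ (m (j + s) : ℝ) := by
      have h := h2 (j + s)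
      have h' : (2:ℝ) ≤ (m (j+s):ℝ) := by exact_mod_cast h
      linarith
    have h2' := Bpos h2 (j + s + 1)
    apply div_nonneg (by linarith) (le_of_lt h2')
  have hsum : Summable (fun j => ((m (j + s) : ℝ) - 1) / (Bprod m (j + s + 1) : ℝ)) :=
    Summable.of_nonneg_of_le hnn hle summable_geometric_two
  rw [hsum.hasSum_iff_tendsto_nat]
  have heq : ∀ n, ∑ j ∈ Finset.range n, ((m (j + s) : ℝ) - 1) / (Bprod m (j + s + 1) : ℝ)
      = 1 / (Bprod m s : ℝ) - 1 / (Bprod m (n + s) : ℝ) := by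
    intro n
    have h := Finset.sum_range_sub' (fun i => 1 / (Bprod m (i + s) : ℝ)) n
    simp only [Nat.zero_add] at h
    rw [← h]
    apply Finset.sum_congr rfl
    intro j _
    rw [key_identity h2 (j + s)]
    have e : j + 1 + s = j + s + 1 := by omega
    rw [e]
  simp only [heq]
  have htend : Tendsto (fun n => 1 / (Bprod m (n + s) : ℝ)) atTop (𝓝 0) := by
    apply squeeze_zero_norm (a := fun n => (1/2 : ℝ) ^ n)
    · intro n
      rw [Real.norm_eq_abs, abs_of_nonneg (by have := Bpos h2 (n+s); positivity)]
      calc 1 / (Bprod m (n + s) : ℝ) ≤ (1/2) ^ (n + s) := invB_le h2 _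
        _ ≤ (1/2) ^ n := pow_le_pow_of_le_one (by norm_num) (by norm_num) (Nat.le_add_right _ _)
    · exact tendsto_pow_atTop_nhds_zero_of_lt_one (by norm_num) (by norm_num)
  have := htend.const_sub (1 / (Bprod m s : ℝ))
  simpa using this

lemma tail_le (h2 : ∀ i, 2 ≤ m i) {c : ℕ → ℕ} (hc : ∀ j, c j < m j) (s : ℕ) :
    ∑' j, (c (j + s) : ℝ) / (Bprod m (j + s + 1) : ℝ) ≤ 1 / (Bprod m s : ℝ) := by
  rw [← (hasSum_tail h2 s).tsum_eq]
  apply Summable.tsum_le_tsum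
  · intro j
    have h := hc (j + s)
    have h' : (c (j+s) : ℝ) ≤ (m (j+s) : ℝ) - 1 := by
      have : (c (j+s) : ℝ) + 1 ≤ (m (j+s) : ℝ) := by exact_mod_cast h
      linarith
    gcongr
  · exact (summable_nat_add_iff s).2 (summable_digits h2 hc)
  · exact (hasSum_tail h2 s).summable

lemma tail_lt (h2 : ∀ i, 2 ≤ m i) {c : ℕ → ℕ} (hc : ∀ j, c j < m j)
    (hio : ∀ N, ∃ j, N ≤ j ∧ c j + 1 < m j) (s : ℕ) :
    ∑' j, (c (j + s) : ℝ) / (Bprod m (j + s + 1) : ℝ) < 1 / (Bprod m s : ℝ) := by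
  rw [← (hasSum_tail h2 s).tsum_eq]
  obtain ⟨j0, hj0, hstrict⟩ := hio s
  apply Summable.tsum_lt_tsum (i := j0 - s)
  · intro j
    dsimp only
    have h := hc (j + s)
    have h' : (c (j+s) : ℝ) ≤ (m (j+s) : ℝ) - 1 := by
      have : (c (j+s) : ℝ) + 1 ≤ (m (j+s) : ℝ) := by exact_mod_cast h
      linarith
    gcongr
  · have hidx : j0 - s + s = j0 := by omega
    rw [hidx]
    have h' : (c j0 : ℝ) < (m j0 : ℝ) - 1 := by
      have : (c j0 : ℝ) + 1 + 1 ≤ (m j0 : ℝ) := by exact_mod_cast hstrict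
      linarith
    have := Bpos h2 (j0 + 1)
    gcongr
  · exact (summable_nat_add_iff s).2 (summable_digits h2 hc)
  · exact (hasSum_tail h2 s).summable

lemma sum_lt_one (h2 : ∀ i, 2 ≤ m i) {c : ℕ → ℕ} (hc : ∀ j, c j < m j)
    (hio : ∀ N, ∃ j, N ≤ j ∧ c j + 1 < m j) :
    ∑' j, (c j : ℝ) / (Bprod m (j + 1) : ℝ) < 1 := by
  have h := tail_lt h2 hc hio 0
  simp only [Nat.add_zero] at h
  have hB0 : (Bprod m 0 : ℝ) = 1 := by simp [Bprod]
  rw [hB0] at h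
  simpa using h

/-- Uniqueness helper: an asymmetric contradiction. -/
lemma digits_ne_aux (h2 : ∀ i, 2 ≤ m i) {c c' : ℕ → ℕ}
    (hc : ∀ j, c j < m j) (hc' : ∀ j, c' j < m j)
    (hio : ∀ N, ∃ j, N ≤ j ∧ c j + 1 < m j)
    (hsum : ∑' j, (c j : ℝ) / (Bprod m (j + 1) : ℝ)
      = ∑' j, (c' j : ℝ) / (Bprod m (j + 1) : ℝ))
    (s : ℕ) (heads : ∀ t, t < s → c t = c' t) (hlt : c s < c' s) : False := by
  set f : ℕ → ℝ := fun j => (c j : ℝ) / (Bprod m (j + 1) : ℝ) with hf_def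
  set f' : ℕ → ℝ := fun j => (c' j : ℝ) / (Bprod m (j + 1) : ℝ) with hf'_def
  have hf : Summable f := summable_digits h2 hc
  have hf' : Summable f' := summable_digits h2 hc'
  -- tails are equal
  have htails : ∑' j, f (j + s) = ∑' j, f' (j + s) := by
    have e1 := Summable.sum_add_tsum_nat_add (f := f) s hf
    have e2 := Summable.sum_add_tsum_nat_add (f := f') s hf'
    have eheads : ∑ i ∈ Finset.range s, f i = ∑ i ∈ Finset.range s, f' i := by
      apply Finset.sum_congr rfl
      intro t ht
      simp only [hf_def, hf'_def, heads t (Finset.mem_range.1 ht)]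
    rw [hsum] at e1
    linarith
  -- split off the first term of each tail
  have hsplit : ∀ (g : ℕ → ℝ), Summable g →
      ∑' j, g (j + s) = g s + ∑' j, g (j + (s + 1)) := by
    intro g hg
    have hg' : Summable (fun j => g (j + s)) := (summable_nat_add_iff s).2 hg
    have := Summable.tsum_eq_zero_add hg'
    simp only [Nat.zero_add] at this
    rw [this]
    congr 1
    apply tsum_congr
    intro j
    congr 1
    omega
  rw [hsplit f hf, hsplit f' hf'] at htails
  have h1 : ∑' j, f (j + (s + 1)) < 1 / (Bprod m (s + 1) : ℝ) := by
    have := tail_lt h2 hc hio (s + 1)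
    convert this using 2
  have h2' : (0:ℝ) ≤ ∑' j, f' (j + (s + 1)) := by
    apply tsum_nonneg
    intro j
    have := Bpos h2 (j + (s+1) + 1)
    simp only [hf'_def]
    positivity
  have h3 : f s + 1 / (Bprod m (s + 1) : ℝ) ≤ f' s := by
    simp only [hf_def, hf'_def]
    have hB := Bpos h2 (s + 1)
    rw [← add_div, div_le_div_iff₀ hB hB]
    have : (c s : ℝ) + 1 ≤ (c' s : ℝ) := by exact_mod_cast hlt
    nlinarith
  linarith

lemma digits_unique (h2 : ∀ i, 2 ≤ m i) {c c' : ℕ → ℕ}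
    (hc : ∀ j, c j < m j) (hc' : ∀ j, c' j < m j)
    (hio : ∀ N, ∃ j, N ≤ j ∧ c j + 1 < m j)
    (hio' : ∀ N, ∃ j, N ≤ j ∧ c' j + 1 < m j)
    (hsum : ∑' j, (c j : ℝ) / (Bprod m (j + 1) : ℝ)
      = ∑' j, (c' j : ℝ) / (Bprod m (j + 1) : ℝ)) :
    c = c' := by
  funext s
  induction s using Nat.strong_induction_on with
  | _ s ih =>
    rcases lt_trichotomy (c s) (c' s) with h | h | h
    · exact absurd (digits_ne_aux h2 hc hc' hio hsum s (fun t ht => ih t ht) h) id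
    · exact h
    · exact absurd (digits_ne_aux h2 hc' hc hio' hsum.symm s (fun t ht => (ih t ht).symm) h) id

lemma tsum_single_diff (h2 : ∀ i, 2 ≤ m i) {u v : ℕ → ℕ}
    (hu : ∀ j, u j < m j) (hv : ∀ j, v j < m j)
    (s : ℕ) (hagree : ∀ j, j ≠ s → u j = v j) :
    ∑' j, (u j : ℝ) / (Bprod m (j + 1) : ℝ) - ∑' j, (v j : ℝ) / (Bprod m (j + 1) : ℝ)
      = ((u s : ℝ) - (v s : ℝ)) / (Bprod m (s + 1) : ℝ) := by
  rw [← Summable.tsum_sub (summable_digits h2 hu) (summable_digits h2 hv)]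
  rw [tsum_eq_single s (fun j hj => by rw [hagree j hj]; ring)]
  rw [sub_div]

end helpers

/-- `b` is the sequence of Cantor series digits of `α` with respect to the bases `m`:
`α = Σ b j / Bprod m (j+1)`, with `b j < m j`, and `b j < m j - 1` infinitely often. -/
def IsCantorDigits (m : ℕ → ℕ) (α : ℝ) (b : ℕ → ℕ) : Prop :=
  (∀ j, b j < m j) ∧ (∀ N, ∃ j, N ≤ j ∧ b j + 1 < m j) ∧
  α = ∑' j, (b j : ℝ) / (Bprod m (j + 1) : ℝ)

/-- If the permuted-digit map has a derivative at a point, the derivative is an integer,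
given by differences of permutation values at consecutive digits. -/
theorem stmt15 (m : ℕ → ℕ) (h2 : ∀ i, 2 ≤ m i)
    (hcop : Pairwise fun i j => Nat.Coprime (m i) (m j))
    (π : ℕ → ℕ → ℕ)
    (hbij : ∀ i, Set.BijOn (π i) (Set.Iio (m i)) (Set.Iio (m i)))
    (b : ℝ → ℕ → ℕ) (hb : ∀ α ∈ Set.Ico (0 : ℝ) 1, IsCantorDigits m α (b α))
    (T : ℝ → ℝ)
    (hT : ∀ α ∈ Set.Ico (0 : ℝ) 1,
      T α = ∑' j, (π j (b α j) : ℝ) / (Bprod m (j + 1) : ℝ))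
    (α : ℝ) (hα : α ∈ Set.Ico (0 : ℝ) 1) (d : ℝ)
    (hd : HasDerivWithinAt T d (Set.Ico (0 : ℝ) 1) α) :
    (∃ z : ℤ, d = (z : ℝ)) ∧
    (∃ N, ∀ s ≥ N, b α s ≠ 0 →
      d = (π s (b α s) : ℝ) - (π s (b α s - 1) : ℝ)) ∧
    ((∀ N, ∃ s ≥ N, b α s = 0) →
      ∀ N, ∃ s ≥ N, b α s = 0 ∧ d = (π s 1 : ℝ) - (π s 0 : ℝ)) := by
  obtain ⟨haB, haio, haeq⟩ := hb α hα
  set a : ℕ → ℕ := b α with ha_def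
  -- the replacement digit at position s
  set k : ℕ → ℕ := fun s => if a s = 0 then 1 else a s - 1 with hk_def
  have hk_lt : ∀ s, k s < m s := by
    intro s
    have h1 := h2 s
    have h2' := haB s
    by_cases h : a s = 0 <;> simp only [hk_def, h, if_true, if_false, ite_true, ite_false] <;> omega
  set c : ℕ → ℕ → ℕ := fun s => Function.update a s (k s) with hc_def
  have hcB : ∀ s j, c s j < m j := by
    intro s j
    rcases eq_or_ne j s with rfl | h
    · simp only [hc_def, Function.update_self]; exact hk_lt j
    · simp only [hc_def, Function.update_of_ne h]; exact haB j
  have hcio : ∀ s N, ∃ j, N ≤ j ∧ c s j + 1 < m j := by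
    intro s N
    obtain ⟨j, hj, hjlt⟩ := haio (max N (s + 1))
    refine ⟨j, le_trans (le_max_left _ _) hj, ?_⟩
    have hjs : j ≠ s := by have := le_trans (le_max_right _ _) hj; omega
    simpa only [hc_def, Function.update_of_ne hjs] using hjlt
  -- the perturbation and perturbed points
  set ε : ℕ → ℝ := fun s => ((k s : ℝ) - (a s : ℝ)) / (Bprod m (s + 1) : ℝ) with hε_def
  have hε_eq : ∀ s, ε s = if a s = 0 then 1 / (Bprod m (s + 1) : ℝ)
      else -(1 / (Bprod m (s + 1) : ℝ)) := by
    intro s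
    by_cases h : a s = 0
    · simp [hε_def, hk_def, h]
    · have h1 : 1 ≤ a s := Nat.one_le_iff_ne_zero.2 h
      have : ((a s - 1 : ℕ) : ℝ) = (a s : ℝ) - 1 := by
        push_cast [Nat.cast_sub h1]; ring
      simp only [hε_def, hk_def, h, if_false, ite_false, this]
      ring
  have hεabs : ∀ s, |ε s| = 1 / (Bprod m (s + 1) : ℝ) := by
    intro s
    have hB := Bpos h2 (s + 1)
    rw [hε_eq s]
    by_cases h : a s = 0 <;> simp [h, abs_of_pos, abs_of_neg, one_div, inv_pos, hB,
      abs_of_nonneg (le_of_lt (by positivity : (0:ℝ) < 1 / (Bprod m (s+1):ℝ)))]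
  have hεne : ∀ s, ε s ≠ 0 := by
    intro s h
    have h1 := hεabs s
    rw [h, abs_zero] at h1
    have hB := Bpos h2 (s + 1)
    have h3 : (0:ℝ) < 1 / (Bprod m (s+1) : ℝ) := by positivity
    linarith
  set α' : ℕ → ℝ := fun s => α + ε s with hα'_def
  have hsum_c : ∀ s, ∑' j, (c s j : ℝ) / (Bprod m (j + 1) : ℝ) = α' s := by
    intro s
    have hdiff := tsum_single_diff h2 (hcB s) haB s
      (fun j hj => by simp only [hc_def, Function.update_of_ne hj])
    have hcss : c s s = k s := by simp [hc_def]
    rw [hcss] at hdiff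
    have : α' s = α + ε s := rfl
    rw [this, haeq, hε_def]
    linarith
  have hmem : ∀ s, α' s ∈ Set.Ico (0 : ℝ) 1 := by
    intro s
    constructor
    · rw [← hsum_c s]
      apply tsum_nonneg
      intro j
      have := Bpos h2 (j + 1)
      positivity
    · rw [← hsum_c s]
      exact sum_lt_one h2 (hcB s) (hcio s)
  have hbα' : ∀ s, b (α' s) = c s := by
    intro s
    obtain ⟨h1, hio', h3⟩ := hb (α' s) (hmem s)
    exact digits_unique h2 h1 (hcB s) hio' (hcio s) (by rw [← h3, hsum_c s])
  -- π digit bounds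
  have hπ : ∀ (u : ℕ → ℕ), (∀ j, u j < m j) → ∀ j, π j (u j) < m j := by
    intro u hu j
    exact Set.mem_Iio.1 ((hbij j).mapsTo (Set.mem_Iio.2 (hu j)))
  -- the integer slopes
  set q : ℕ → ℤ := fun s => if a s = 0 then (π s 1 : ℤ) - (π s 0 : ℤ)
    else (π s (a s) : ℤ) - (π s (a s - 1) : ℤ) with hq_def
  have hslope : ∀ s, slope T α (α' s) = ((q s : ℤ) : ℝ) := by
    intro s
    have hTα := hT α hα
    have hTα' := hT (α' s) (hmem s)
    rw [hbα' s] at hTα'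
    have hdiff := tsum_single_diff h2 (hπ _ (hcB s)) (hπ _ haB) s
      (fun j hj => by simp only [hc_def, Function.update_of_ne hj])
    have hcss : c s s = k s := by simp [hc_def]
    rw [hcss] at hdiff
    have hTsub : T (α' s) - T α
        = ((π s (k s) : ℝ) - (π s (a s) : ℝ)) / (Bprod m (s + 1) : ℝ) := by
      rw [hTα, hTα']
      exact hdiff
    have hB := Bpos h2 (s + 1)
    rw [slope_def_field]
    rw [div_eq_iff (by simpa [hα'_def] using hεne s : α' s - α ≠ 0)]
    have hsub : α' s - α = ε s := by simp [hα'_def]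
    rw [hsub, hTsub]
    by_cases h : a s = 0
    · have hk1 : k s = 1 := by simp [hk_def, h]
      rw [hε_eq s, if_pos h]
      simp only [hq_def, h, if_true, ite_true, hk1]
      push_cast
      try field_simp
      try ring
    · have hk1 : k s = a s - 1 := by simp [hk_def, h]
      have h1 : 1 ≤ a s := Nat.one_le_iff_ne_zero.2 h
      rw [hε_eq s, if_neg h]
      simp only [hq_def, h, if_false, ite_false, hk1]
      push_cast [Nat.cast_sub h1]
      try field_simp
      try ring
  -- convergence of the perturbed points
  have hεtend : Tendsto ε atTop (𝓝 0) := by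
    apply squeeze_zero_norm (a := fun s => (1/2 : ℝ) ^ s)
    · intro s
      rw [Real.norm_eq_abs, hεabs s]
      calc 1 / (Bprod m (s + 1) : ℝ) ≤ (1/2) ^ (s + 1) := invB_le h2 _
        _ ≤ (1/2) ^ s := pow_le_pow_of_le_one (by norm_num) (by norm_num) (Nat.le_succ s)
    · exact tendsto_pow_atTop_nhds_zero_of_lt_one (by norm_num) (by norm_num)
  have hαtend : Tendsto α' atTop (𝓝[Set.Ico (0:ℝ) 1 \ {α}] α) := by
    rw [tendsto_nhdsWithin_iff]
    constructor
    · have := hεtend.const_add α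
      simpa using this
    · filter_upwards with s
      refine ⟨hmem s, ?_⟩
      simp only [Set.mem_singleton_iff, hα'_def]
      intro h
      exact hεne s (by linarith [h] )
  have hqtend : Tendsto (fun s => ((q s : ℤ) : ℝ)) atTop (𝓝 d) := by
    have := (hasDerivWithinAt_iff_tendsto_slope.1 hd).comp hαtend
    exact this.congr hslope
  -- an integer sequence converging must be eventually constant
  obtain ⟨N, hN⟩ := Metric.tendsto_atTop.1 hqtend (1/2) (by norm_num)
  have hconst : ∀ s, N ≤ s → q s = q N := by
    intro s hs
    have h1 := hN s hs
    have h2' := hN N le_rfl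
    rw [Real.dist_eq] at h1 h2'
    have habs : |((q s : ℤ) : ℝ) - ((q N : ℤ) : ℝ)| < 1 := by
      calc |((q s : ℤ) : ℝ) - ((q N : ℤ) : ℝ)|
          ≤ |((q s : ℤ) : ℝ) - d| + |d - ((q N : ℤ) : ℝ)| := abs_sub_le _ _ _
        _ < 1/2 + 1/2 := by rw [abs_sub_comm d]; exact add_lt_add h1 h2'
        _ = 1 := by norm_num
    have hlt : |q s - q N| < 1 := by exact_mod_cast (by push_cast; exact habs : |((q s - q N : ℤ) : ℝ)| < 1)
    rcases abs_lt.1 hlt with ⟨hl1, hl2⟩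
    omega
  have hd_eqN : d = ((q N : ℤ) : ℝ) := by
    have h1 : Tendsto (fun _ : ℕ => ((q N : ℤ) : ℝ)) atTop (𝓝 d) := by
      apply hqtend.congr'
      filter_upwards [eventually_ge_atTop N] with s hs
      rw [hconst s hs]
    exact tendsto_nhds_unique h1 tendsto_const_nhds
  have hd_eq : ∀ s, N ≤ s → d = ((q s : ℤ) : ℝ) := by
    intro s hs
    rw [hd_eqN, hconst s hs]
  refine ⟨⟨q N, hd_eqN⟩, ⟨N, ?_⟩, ?_⟩
  · intro s hs hne
    have := hd_eq s hs
    rw [this]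
    simp only [hq_def, hne, if_false, ite_false]
    push_cast
    ring
  · intro hzero N'
    obtain ⟨s, hs, h0⟩ := hzero (max N N')
    refine ⟨s, le_trans (le_max_right _ _) hs, h0, ?_⟩
    rw [hd_eq s (le_trans (le_max_left _ _) hs)]
    simp only [hq_def, h0, if_true, ite_true]
    push_cast
    ring
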